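/- In the setting of the previous statement, if additionally every row of A_{1,3} contains a negative entry (i.e., A_{1,3}𝟙 ≪ 0 entrywise), then (D₁ - A_{1,1})v₁ = A_{1,3}v₃ is strictly positive, and consequently D₁ - A_{1,1} is positive definite. -/

import Mathlib

open Matrix Finset

theorem stmt12 (n₁ n₃ : ℕ)
    (A₁₁ : Matrix (Fin n₁) (Fin n₁) ℝ) (A₁₃ : Matrix (Fin n₁) (Fin n₃) ℝ)
    (hA₁₁symm : A₁₁.IsSymm) (hA₁₁0 : ∀ i j, 0 ≤ A₁₁ i j)
    (hA₁₁diag : ∀ i, A₁₁ i i = 0)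
    (hA₁₃0 : ∀ i j, A₁₃ i j ≤ 0)
    (hA₁₃rows : ∀ i, (A₁₃ *ᵥ 1) i < 0)
    (v₁ : Fin n₁ → ℝ) (v₃ : Fin n₃ → ℝ)
    (hv₁ : ∀ i, 0 < v₁ i) (hv₃ : ∀ i, v₃ i < 0)
    (D₁ : Matrix (Fin n₁) (Fin n₁) ℝ) (hD₁ : D₁.IsDiag)
    (hD₁v : D₁ *ᵥ v₁ = A₁₁ *ᵥ v₁ + A₁₃ *ᵥ v₃) :
    (D₁ - A₁₁) *ᵥ v₁ = A₁₃ *ᵥ v₃ ∧ (∀ i, 0 < ((D₁ - A₁₁) *ᵥ v₁) i) ∧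
      (D₁ - A₁₁).PosDef := by
  have hMv : (D₁ - A₁₁) *ᵥ v₁ = A₁₃ *ᵥ v₃ := by
    rw [sub_mulVec, hD₁v]; abel
  have hpos : ∀ i, 0 < ((D₁ - A₁₁) *ᵥ v₁) i := by
    intro i
    rw [hMv]
    obtain ⟨j, hj⟩ : ∃ j, A₁₃ i j < 0 := by
      by_contra h
      push_neg at h
      refine absurd (hA₁₃rows i) (not_lt.2 ?_)
      simp only [mulVec, dotProduct, Pi.one_apply, mul_one]
      exact Finset.sum_nonneg fun j _ => h j
    simp only [mulVec, dotProduct]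
    exact Finset.sum_pos'
      (fun k _ => by nlinarith [hA₁₃0 i k, (hv₃ k).le])
      ⟨j, Finset.mem_univ j, mul_pos_of_neg_of_neg hj (hv₃ j)⟩
  set M := D₁ - A₁₁ with hM
  have hMsymm : ∀ i j, M i j = M j i := by
    intro i j
    rcases eq_or_ne i j with rfl | hij
    · rfl
    · rw [hM]
      simp only [Matrix.sub_apply, hD₁ hij, hD₁ (Ne.symm hij), hA₁₁symm.apply i j]
  refine ⟨hMv, hpos, posDef_iff_dotProduct_mulVec.mpr ⟨?_, ?_⟩⟩
  · -- Hermitian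
    rw [Matrix.IsHermitian, conjTranspose_eq_transpose_of_trivial]
    exact (hD₁.isSymm.sub hA₁₁symm)
  · intro x hx
    have hstar : star x = x := star_trivial x
    rw [hstar]
    set y : Fin n₁ → ℝ := fun i => x i / v₁ i with hy
    have hxy : ∀ i, x i = y i * v₁ i := by
      intro i
      show x i = x i / v₁ i * v₁ i
      rw [div_mul_cancel₀ _ (hv₁ i).ne']
    have key : ∀ i j, x i * M i j * x j + x j * M j i * x i
        - M i j * v₁ j * v₁ i * y i ^ 2 - M j i * v₁ i * v₁ j * y j ^ 2
        - A₁₁ i j * v₁ i * v₁ j * (y i - y j) ^ 2 = 0 := by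
      intro i j
      rcases eq_or_ne i j with rfl | hij
      · rw [hxy i, hA₁₁diag i]; ring
      · have hMij : M i j = - A₁₁ i j := by
          simp [hM, Matrix.sub_apply, hD₁ hij]
        have hMji : M j i = - A₁₁ i j := by
          rw [← hMsymm i j, hMij]
        rw [hMij, hMji, hxy i, hxy j]; ring
    have sum0 : ∑ i, ∑ j, (x i * M i j * x j + x j * M j i * x i
        - M i j * v₁ j * v₁ i * y i ^ 2 - M j i * v₁ i * v₁ j * y j ^ 2
        - A₁₁ i j * v₁ i * v₁ j * (y i - y j) ^ 2) = 0 := by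
      exact Finset.sum_eq_zero fun i _ => Finset.sum_eq_zero fun j _ => key i j
    set S : ℝ := ∑ i, ∑ j, x i * M i j * x j with hS
    set T : ℝ := ∑ i, ∑ j, M i j * v₁ j * v₁ i * y i ^ 2 with hT
    set K : ℝ := ∑ i, ∑ j, A₁₁ i j * v₁ i * v₁ j * (y i - y j) ^ 2 with hK
    have comm1 : (∑ i, ∑ j, x j * M j i * x i) = S := Finset.sum_comm
    have comm2 : (∑ i, ∑ j, M j i * v₁ i * v₁ j * y j ^ 2) = T :=
      Finset.sum_comm
    have e1 : S + S - T - T - K = 0 := by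
      have h2 : S + S - T - T - K
          = ∑ i, ∑ j, (x i * M i j * x j + x j * M j i * x i
            - M i j * v₁ j * v₁ i * y i ^ 2 - M j i * v₁ i * v₁ j * y j ^ 2
            - A₁₁ i j * v₁ i * v₁ j * (y i - y j) ^ 2) := by
        simp only [Finset.sum_sub_distrib, Finset.sum_add_distrib, comm1, comm2, hS, hT, hK]
      rw [h2, sum0]
    have hKnn : 0 ≤ K := by
      refine Finset.sum_nonneg fun i _ => Finset.sum_nonneg fun j _ => ?_
      have := hA₁₁0 i j
      have := (hv₁ i).le
      have := (hv₁ j).le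
      positivity
    have hTpos : 0 < T := by
      have hT' : T = ∑ i, (M *ᵥ v₁) i * (v₁ i * y i ^ 2) := by
        rw [hT]
        refine Finset.sum_congr rfl fun i _ => ?_
        rw [mulVec, dotProduct, Finset.sum_mul]
        exact Finset.sum_congr rfl fun j _ => by ring
      rw [hT']
      obtain ⟨i, hi⟩ := Function.ne_iff.mp hx
      have hyi : y i ≠ 0 := by
        intro h
        exact hi (by rw [hxy i, h, zero_mul]; rfl)
      refine Finset.sum_pos'
        (fun k _ => mul_nonneg (hpos k).le
          (mul_nonneg (hv₁ k).le (sq_nonneg _))) ⟨i, Finset.mem_univ i, ?_⟩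
      exact mul_pos (hpos i) (mul_pos (hv₁ i) (sq_pos_iff.mpr hyi))
    have hSpos : 0 < S := by nlinarith
    calc (0:ℝ) < S := hSpos
      _ = x ⬝ᵥ M *ᵥ x := by
        rw [hS, dotProduct]
        exact Finset.sum_congr rfl fun i _ => by
          rw [mulVec, dotProduct, Finset.mul_sum]
          exact Finset.sum_congr rfl fun j _ => by ring
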